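/- Let (λ(t), x(t), v(t)) be a continuously differentiable solution on [0,∞) of the accelerated primal-dual flow: θ(t)λ'(t) = A v(t) − b, x'(t) = v(t) − x(t), γ(t)v'(t) = μ_β(x(t) − v(t)) − ∇_x L_β(x(t), λ(t)), where θ(t) = θ₀ e^{−t} and γ(t) = μ_β + (γ₀ − μ_β)e^{−t} with θ₀, γ₀ > 0. Define E(t) = L_β(x(t), λ*) − L_β(x*, λ(t)) + (γ(t)/2)‖v(t) − x*‖² + (θ(t)/2)‖λ(t) − λ*‖², and R₀ = √(2θ₀E(0)) + θ₀‖λ(0) − λ*‖ + ‖Ax(0) − b‖. Then for all t ≥ 0, ‖Ax(t) − b‖ ≤ e^{−t} R₀ and |f(x(t)) − f(x*)| ≤ e^{−t}(E(0) + R₀‖λ*‖). -/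

import Mathlib

open scoped RealInnerProductSpace

/-- The smallest singular value of a linear map between Euclidean spaces. -/
noncomputable def sigmaMin {n m : ℕ}
    (A : EuclideanSpace ℝ (Fin n) →L[ℝ] EuclideanSpace ℝ (Fin m)) : ℝ :=
  sInf {c : ℝ | ∃ x : EuclideanSpace ℝ (Fin n), ‖x‖ = 1 ∧ ‖A x‖ = c}

theorem sigmaMin_nonneg' {n m : ℕ}
    (A : EuclideanSpace ℝ (Fin n) →L[ℝ] EuclideanSpace ℝ (Fin m)) :
    0 ≤ sigmaMin A :=
  Real.sInf_nonneg fun _ ⟨_, _, hc⟩ => hc ▸ norm_nonneg _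

theorem sigmaMin_mul_norm_le' {n m : ℕ}
    (A : EuclideanSpace ℝ (Fin n) →L[ℝ] EuclideanSpace ℝ (Fin m))
    (z : EuclideanSpace ℝ (Fin n)) : sigmaMin A * ‖z‖ ≤ ‖A z‖ := by
  rcases eq_or_ne z 0 with rfl | hz
  · simp
  · have hzn : (0:ℝ) < ‖z‖ := norm_pos_iff.mpr hz
    have hmem : ‖A (‖z‖⁻¹ • z)‖ ∈
        {c : ℝ | ∃ y : EuclideanSpace ℝ (Fin n), ‖y‖ = 1 ∧ ‖A y‖ = c} := by
      refine ⟨‖z‖⁻¹ • z, ?_, rfl⟩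
      rw [norm_smul, norm_inv, norm_norm, inv_mul_cancel₀ hzn.ne']
    have hbdd : BddBelow {c : ℝ | ∃ y : EuclideanSpace ℝ (Fin n), ‖y‖ = 1 ∧ ‖A y‖ = c} :=
      ⟨0, fun c ⟨y, _, hc⟩ => hc ▸ norm_nonneg _⟩
    have h1 : sigmaMin A ≤ ‖A (‖z‖⁻¹ • z)‖ := csInf_le hbdd hmem
    have h2 : ‖A (‖z‖⁻¹ • z)‖ = ‖z‖⁻¹ * ‖A z‖ := by
      rw [map_smul, norm_smul, norm_inv, norm_norm]
    rw [h2] at h1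
    calc sigmaMin A * ‖z‖ ≤ (‖z‖⁻¹ * ‖A z‖) * ‖z‖ :=
          mul_le_mul_of_nonneg_right h1 hzn.le
      _ = ‖A z‖ := by field_simp

theorem key_eq' {n m : ℕ}
    (A : EuclideanSpace ℝ (Fin n) →L[ℝ] EuclideanSpace ℝ (Fin m))
    (b : EuclideanSpace ℝ (Fin m))
    (β μ s μβ γt θt fX fxs : ℝ) (hμβ : μβ = μ + β * s)
    (X V xs G : EuclideanSpace ℝ (Fin n)) (Λ ls : EuclideanSpace ℝ (Fin m))
    (hb : A xs = b) :
    ⟪G, V - X⟫ + β/2*(⟪A X - b, A (V - X)⟫ + ⟪A (V-X), A X - b⟫) + ⟪ls, A (V - X)⟫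
    + (μβ - γt)/2*‖V-xs‖^2
    + ⟪μβ•(X-V) - (G + β•(ContinuousLinearMap.adjoint A) (A X - b)
        + (ContinuousLinearMap.adjoint A) Λ), V-xs⟫
    + (-θt)/2*‖Λ-ls‖^2 + ⟪A V - b, Λ - ls⟫
    + (fX + β/2*‖A X-b‖^2 + ⟪ls, A X - b⟫ - fxs + γt/2*‖V-xs‖^2 + θt/2*‖Λ-ls‖^2)
    = (fX + ⟪G, xs - X⟫ + μ/2*‖xs - X‖^2 - fxs)
      + β/2*(s*‖X-xs‖^2 - ‖A X-b‖^2) - μβ/2*‖X-V‖^2 := by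
  subst hμβ
  simp only [← real_inner_self_eq_norm_sq, inner_sub_left, inner_sub_right,
    inner_add_left, inner_add_right, real_inner_smul_left, real_inner_smul_right,
    map_sub, ContinuousLinearMap.adjoint_inner_left, hb]
  ring_nf
  simp only [real_inner_comm]
  ring

set_option maxHeartbeats 2000000 in
/-- Lemma 2.1 (i): exponential decay inequality for the Lyapunov function of the
accelerated primal-dual flow. -/
theorem apd_flow_feasibility_objective_decay {n m : ℕ}
    (f : EuclideanSpace ℝ (Fin n) → ℝ)
    (gradf : EuclideanSpace ℝ (Fin n) → EuclideanSpace ℝ (Fin n))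
    (A : EuclideanSpace ℝ (Fin n) →L[ℝ] EuclideanSpace ℝ (Fin m))
    (b : EuclideanSpace ℝ (Fin m))
    (μ L β θ₀ γ₀ μβ : ℝ)
    (hμ : 0 ≤ μ) (hμL : μ ≤ L) (hβ : 0 ≤ β) (hθ₀ : 0 < θ₀) (hγ₀ : 0 < γ₀)
    (hμβ : μβ = μ + β * sigmaMin A ^ 2)
    (hgrad : ∀ x, HasGradientAt f (gradf x) x)
    (hconv : ∀ x y, f x + ⟪gradf x, y - x⟫ + μ / 2 * ‖y - x‖ ^ 2 ≤ f y)
    (hlip : ∀ x y, ⟪gradf x - gradf y, x - y⟫ ≤ L * ‖x - y‖ ^ 2)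
    (xs : EuclideanSpace ℝ (Fin n)) (ls : EuclideanSpace ℝ (Fin m))
    (hKKT1 : A xs = b)
    (hKKT2 : gradf xs + (ContinuousLinearMap.adjoint A) ls = 0)
    (lam : ℝ → EuclideanSpace ℝ (Fin m))
    (x v : ℝ → EuclideanSpace ℝ (Fin n))
    (lam' : ℝ → EuclideanSpace ℝ (Fin m))
    (x' v' : ℝ → EuclideanSpace ℝ (Fin n))
    (hlamd : ∀ t, 0 ≤ t → HasDerivAt lam (lam' t) t)
    (hxd : ∀ t, 0 ≤ t → HasDerivAt x (x' t) t)
    (hvd : ∀ t, 0 ≤ t → HasDerivAt v (v' t) t)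
    (hlamc : Continuous lam') (hxc : Continuous x') (hvc : Continuous v')
    (θ γ : ℝ → ℝ)
    (hθ : ∀ t, θ t = θ₀ * Real.exp (-t))
    (hγ : ∀ t, γ t = μβ + (γ₀ - μβ) * Real.exp (-t))
    (hode1 : ∀ t, 0 ≤ t → θ t • lam' t = A (v t) - b)
    (hode2 : ∀ t, 0 ≤ t → x' t = v t - x t)
    (hode3 : ∀ t, 0 ≤ t → γ t • v' t =
      μβ • (x t - v t) -
        (gradf (x t) + β • (ContinuousLinearMap.adjoint A) (A (x t) - b)
          + (ContinuousLinearMap.adjoint A) (lam t)))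
    (Lβ : EuclideanSpace ℝ (Fin n) → EuclideanSpace ℝ (Fin m) → ℝ)
    (hLβ : ∀ z w, Lβ z w = f z + β / 2 * ‖A z - b‖ ^ 2 + ⟪w, A z - b⟫)
    (Efun : ℝ → ℝ)
    (hE : ∀ t, Efun t = Lβ (x t) ls - Lβ xs (lam t)
      + γ t / 2 * ‖v t - xs‖ ^ 2 + θ t / 2 * ‖lam t - ls‖ ^ 2)
    (R₀ : ℝ)
    (hR₀ : R₀ = Real.sqrt (2 * θ₀ * Efun 0) + θ₀ * ‖lam 0 - ls‖ + ‖A (x 0) - b‖) :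
    ∀ t, 0 ≤ t →
      ‖A (x t) - b‖ ≤ Real.exp (-t) * R₀ ∧
      |f (x t) - f xs| ≤ Real.exp (-t) * (Efun 0 + R₀ * ‖ls‖) := by
  -- basic scalar facts
  have hσ0 : 0 ≤ sigmaMin A := sigmaMin_nonneg' A
  have hμβ0 : 0 ≤ μβ := by nlinarith [sq_nonneg (sigmaMin A)]
  have hσsq : ∀ z : EuclideanSpace ℝ (Fin n),
      sigmaMin A ^ 2 * ‖z‖ ^ 2 ≤ ‖A z‖ ^ 2 := by
    intro z
    have h := sigmaMin_mul_norm_le' A z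
    nlinarith [norm_nonneg z, norm_nonneg (A z), mul_nonneg hσ0 (norm_nonneg z)]
  have hγpos : ∀ t : ℝ, 0 ≤ t → 0 ≤ γ t := by
    intro t ht
    rw [hγ]
    have h1 : Real.exp (-t) ≤ 1 := Real.exp_le_one_iff.mpr (by linarith)
    have h2 : (0:ℝ) < Real.exp (-t) := Real.exp_pos _
    nlinarith
  have hθval : ∀ t : ℝ, 0 ≤ θ t := fun t => by
    rw [hθ]; positivity
  -- simplified formula for E
  have hE' : ∀ t, Efun t = f (x t) + β/2 * ‖A (x t) - b‖^2 + ⟪ls, A (x t) - b⟫ - f xs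
      + γ t/2 * ‖v t - xs‖^2 + θ t/2 * ‖lam t - ls‖^2 := by
    intro t
    rw [hE, hLβ, hLβ, hKKT1]
    simp only [sub_self, inner_zero_right, norm_zero]
    ring
  -- convexity at the saddle point: 0 ≤ f z - f xs + ⟪ls, A z - b⟫
  have hgxs : gradf xs = -(ContinuousLinearMap.adjoint A) ls := by
    have := hKKT2; linear_combination (norm := module) this
  have hP : ∀ z : EuclideanSpace ℝ (Fin n), 0 ≤ f z - f xs + ⟪ls, A z - b⟫ := by
    intro z
    have h := hconv xs z
    have h2 : ⟪gradf xs, z - xs⟫ = -⟪ls, A z - b⟫ := by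
      rw [hgxs, inner_neg_left, ContinuousLinearMap.adjoint_inner_left, map_sub, hKKT1]
    rw [h2] at h
    nlinarith [sq_nonneg ‖z - xs‖, norm_nonneg (z - xs)]
  -- nonnegativity of E pieces
  have hEnn : ∀ t, 0 ≤ t → θ t/2 * ‖lam t - ls‖^2 ≤ Efun t ∧
      f (x t) - f xs + ⟪ls, A (x t) - b⟫ ≤ Efun t ∧ 0 ≤ Efun t := by
    intro t ht
    have h1 := hP (x t)
    have h2 : 0 ≤ β/2 * ‖A (x t) - b‖^2 := by positivity
    have h3 : 0 ≤ γ t/2 * ‖v t - xs‖^2 := by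
      have := hγpos t ht; positivity
    have h4 : 0 ≤ θ t/2 * ‖lam t - ls‖^2 := by
      have := hθval t; positivity
    rw [hE' t]
    refine ⟨by linarith, by linarith, by linarith⟩
  -- derivative of E
  set D : ℝ → ℝ := fun t =>
    ⟪gradf (x t), x' t⟫
    + β/2 * (⟪A (x t) - b, A (x' t)⟫ + ⟪A (x' t), A (x t) - b⟫)
    + ⟪ls, A (x' t)⟫
    + (μβ - γ t)/2 * ‖v t - xs‖^2
    + γ t/2 * (⟪v t - xs, v' t⟫ + ⟪v' t, v t - xs⟫)
    + (-θ t)/2 * ‖lam t - ls‖^2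
    + θ t/2 * (⟪lam t - ls, lam' t⟫ + ⟪lam' t, lam t - ls⟫) with hD
  have hEd : ∀ t, 0 ≤ t → HasDerivAt Efun (D t) t := by
    intro t ht
    have hxdt := hxd t ht
    have hvdt := hvd t ht
    have hldt := hlamd t ht
    have hfd : HasDerivAt (fun s => f (x s)) ⟪gradf (x t), x' t⟫ t := by
      have := (hgrad (x t)).hasFDerivAt.comp_hasDerivAt t hxdt
      exact this
    have hgd : HasDerivAt (fun s => A (x s) - b) (A (x' t)) t :=
      (A.hasFDerivAt.comp_hasDerivAt t hxdt).sub_const b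
    have hnorm : HasDerivAt (fun s => ‖A (x s) - b‖^2)
        (⟪A (x t) - b, A (x' t)⟫ + ⟪A (x' t), A (x t) - b⟫) t := by
      simpa only [real_inner_self_eq_norm_sq] using hgd.inner ℝ hgd
    have hinls : HasDerivAt (fun s => ⟪ls, A (x s) - b⟫) ⟪ls, A (x' t)⟫ t := by
      simpa using (hasDerivAt_const t ls).inner ℝ hgd
    have hvsub : HasDerivAt (fun s => v s - xs) (v' t) t := hvdt.sub_const xs
    have hnv : HasDerivAt (fun s => ‖v s - xs‖^2)
        (⟪v t - xs, v' t⟫ + ⟪v' t, v t - xs⟫) t := by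
      simpa only [real_inner_self_eq_norm_sq] using hvsub.inner ℝ hvsub
    have hlsub : HasDerivAt (fun s => lam s - ls) (lam' t) t := hldt.sub_const ls
    have hnl : HasDerivAt (fun s => ‖lam s - ls‖^2)
        (⟪lam t - ls, lam' t⟫ + ⟪lam' t, lam t - ls⟫) t := by
      simpa only [real_inner_self_eq_norm_sq] using hlsub.inner ℝ hlsub
    have hγd : HasDerivAt γ (μβ - γ t) t := by
      have h1 : HasDerivAt (fun s => μβ + (γ₀ - μβ) * Real.exp (-s))
          (μβ - (μβ + (γ₀ - μβ) * Real.exp (-t))) t := by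
        have := (((Real.hasDerivAt_exp (-t)).comp t
          ((hasDerivAt_id t).neg)).const_mul (γ₀ - μβ)).const_add μβ
        exact this.congr_deriv (by ring)
      rw [hγ t, funext hγ]
      exact h1
    have hθd : HasDerivAt θ (-θ t) t := by
      have h1 : HasDerivAt (fun s => θ₀ * Real.exp (-s))
          (-(θ₀ * Real.exp (-t))) t := by
        have := ((Real.hasDerivAt_exp (-t)).comp t ((hasDerivAt_id t).neg)).const_mul θ₀
        exact this.congr_deriv (by ring)
      rw [hθ t, funext hθ]
      exact h1
    have hbig : HasDerivAt (fun s => f (x s) + β/2 * ‖A (x s) - b‖^2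
        + ⟪ls, A (x s) - b⟫ - f xs + γ s/2 * ‖v s - xs‖^2 + θ s/2 * ‖lam s - ls‖^2)
        (D t) t := by
      have h3 : HasDerivAt (fun s => γ s/2 * ‖v s - xs‖^2)
          ((μβ - γ t)/2 * ‖v t - xs‖^2
            + γ t/2 * (⟪v t - xs, v' t⟫ + ⟪v' t, v t - xs⟫)) t :=
        (hγd.div_const 2).mul hnv
      have h4 : HasDerivAt (fun s => θ s/2 * ‖lam s - ls‖^2)
          ((-θ t)/2 * ‖lam t - ls‖^2
            + θ t/2 * (⟪lam t - ls, lam' t⟫ + ⟪lam' t, lam t - ls⟫)) t :=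
        (hθd.div_const 2).mul hnl
      have := ((((hfd.add (hnorm.const_mul (β/2))).add hinls).sub_const (f xs)).add h3).add h4
      exact this.congr_deriv (by rw [hD]; ring)
    have hEeq : Efun = fun s => f (x s) + β/2 * ‖A (x s) - b‖^2
        + ⟪ls, A (x s) - b⟫ - f xs + γ s/2 * ‖v s - xs‖^2 + θ s/2 * ‖lam s - ls‖^2 :=
      funext hE'
    rw [hEeq]
    exact hbig
  -- key inequality: D t + Efun t ≤ 0
  have hkey : ∀ t, 0 ≤ t → D t + Efun t ≤ 0 := by
    intro t ht
    have e1 : γ t/2 * (⟪v t - xs, v' t⟫ + ⟪v' t, v t - xs⟫)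
        = ⟪γ t • v' t, v t - xs⟫ := by
      rw [real_inner_smul_left, real_inner_comm (v t - xs) (v' t)]; ring
    have e2 : θ t/2 * (⟪lam t - ls, lam' t⟫ + ⟪lam' t, lam t - ls⟫)
        = ⟪θ t • lam' t, lam t - ls⟫ := by
      rw [real_inner_smul_left, real_inner_comm (lam t - ls) (lam' t)]; ring
    have hDE : D t + Efun t
        = (f (x t) + ⟪gradf (x t), xs - x t⟫ + μ/2*‖xs - x t‖^2 - f xs)
          + β/2*(sigmaMin A^2*‖x t - xs‖^2 - ‖A (x t) - b‖^2)
          - μβ/2*‖x t - v t‖^2 := by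
      rw [hD]
      simp only [e1, e2, hode1 t ht, hode2 t ht, hode3 t ht, hE' t]
      have hk := key_eq' A b β μ (sigmaMin A ^ 2) μβ (γ t) (θ t) (f (x t)) (f xs) hμβ
        (x t) (v t) xs (gradf (x t)) (lam t) ls hKKT1
      linarith [hk]
    rw [hDE]
    have h1 := hconv (x t) xs
    have h2 : sigmaMin A ^ 2 * ‖x t - xs‖^2 ≤ ‖A (x t) - b‖^2 := by
      have := hσsq (x t - xs)
      rwa [map_sub, hKKT1] at this
    have h3 : 0 ≤ μβ/2 * ‖x t - v t‖^2 := by positivity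
    have h4 : β/2 * (sigmaMin A^2*‖x t - xs‖^2 - ‖A (x t) - b‖^2) ≤ 0 := by
      have h5 := mul_le_mul_of_nonneg_left h2 hβ
      linarith
    linarith
  -- exponential decay of E
  have hdecay : ∀ t, 0 ≤ t → Efun t ≤ Real.exp (-t) * Efun 0 := by
    intro t ht
    set g : ℝ → ℝ := fun s => Real.exp s * Efun s with hg
    have hgd : ∀ s, 0 ≤ s → HasDerivAt g (Real.exp s * (Efun s + D s)) s := by
      intro s hs
      have := (Real.hasDerivAt_exp s).mul (hEd s hs)
      exact this.congr_deriv (by ring)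
    have hanti : AntitoneOn g (Set.Ici (0:ℝ)) := by
      refine antitoneOn_of_deriv_nonpos (convex_Ici 0)
        (fun s hs => ((hgd s hs).continuousAt).continuousWithinAt) ?_ ?_
      · intro s hs
        rw [interior_Ici] at hs
        exact ((hgd s hs.le).differentiableAt).differentiableWithinAt
      · intro s hs
        rw [interior_Ici] at hs
        rw [(hgd s hs.le).deriv]
        have := hkey s hs.le
        have hexp : (0:ℝ) ≤ Real.exp s := (Real.exp_pos s).le
        nlinarith
    have hle : g t ≤ g 0 := hanti (Set.self_mem_Ici) ht ht
    have hg0 : g 0 = Efun 0 := by simp [hg]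
    rw [hg0] at hle
    have hexp : (0:ℝ) < Real.exp t := Real.exp_pos t
    rw [Real.exp_neg]
    have h6 := mul_le_mul_of_nonneg_left hle (le_of_lt (inv_pos.mpr hexp))
    have h7 : (Real.exp t)⁻¹ * (Real.exp t * Efun t) = Efun t := by
      field_simp
    rw [hg, h7] at h6
    exact h6
  have hE0 : 0 ≤ Efun 0 := (hEnn 0 le_rfl).2.2
  -- dual variable bound
  have hlamb : ∀ t, 0 ≤ t → θ₀ * ‖lam t - ls‖ ≤ Real.sqrt (2*θ₀*Efun 0) := by
    intro t ht
    have h1 : θ t/2 * ‖lam t - ls‖^2 ≤ Efun t := (hEnn t ht).1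
    have h2 := hdecay t ht
    rw [hθ t] at h1
    have hexp : (0:ℝ) < Real.exp (-t) := Real.exp_pos _
    have h4 : (θ₀/2 * ‖lam t - ls‖^2) * Real.exp (-t) ≤ Efun 0 * Real.exp (-t) := by
      nlinarith
    have h3 : θ₀/2 * ‖lam t - ls‖^2 ≤ Efun 0 := le_of_mul_le_mul_right h4 hexp
    have h5 : (θ₀ * ‖lam t - ls‖)^2 ≤ 2*θ₀*Efun 0 := by nlinarith
    exact Real.le_sqrt_of_sq_le h5
  -- feasibility identity
  have hfeas : ∀ t, 0 ≤ t → Real.exp t • (A (x t) - b) - θ₀ • lam t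
      = (A (x 0) - b) - θ₀ • lam 0 := by
    intro T hT
    set h : ℝ → EuclideanSpace ℝ (Fin m) :=
      fun s => Real.exp s • (A (x s) - b) - θ₀ • lam s with hh
    have hhd : ∀ s, 0 ≤ s → HasDerivAt h 0 s := by
      intro s hs
      have hgd : HasDerivAt (fun u => A (x u) - b) (A (x' s)) s :=
        (A.hasFDerivAt.comp_hasDerivAt s (hxd s hs)).sub_const b
      have h1 : HasDerivAt (fun u => Real.exp u • (A (x u) - b))
          (Real.exp s • (A (x' s)) + Real.exp s • (A (x s) - b)) s :=
        (Real.hasDerivAt_exp s).smul hgd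
      have h2 := h1.sub ((hlamd s hs).const_smul θ₀)
      have h3 : Real.exp s • (A (x' s)) + Real.exp s • (A (x s) - b)
          - θ₀ • lam' s = 0 := by
        have o1 : A (x' s) = A (v s) - A (x s) := by rw [hode2 s hs, map_sub]
        have o2 : θ₀ • lam' s = Real.exp s • (A (v s) - b) := by
          have ho := hode1 s hs
          rw [hθ s] at ho
          have he : Real.exp s * (θ₀ * Real.exp (-s)) = θ₀ := by
            have : Real.exp s * Real.exp (-s) = 1 := by
              rw [← Real.exp_add, add_neg_cancel, Real.exp_zero]
            nlinarith
          calc θ₀ • lam' s = (Real.exp s * (θ₀ * Real.exp (-s))) • lam' s := by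
                rw [he]
            _ = Real.exp s • ((θ₀ * Real.exp (-s)) • lam' s) := by
                rw [smul_smul]
            _ = Real.exp s • (A (v s) - b) := by rw [ho]
        rw [o1, o2, ← smul_add, ← smul_sub]
        convert smul_zero (Real.exp s) using 2
        abel
      rw [hh]
      rw [h3] at h2
      exact h2
    have hcont : ContinuousOn h (Set.Icc 0 T) := fun s hs =>
      ((hhd s hs.1).continuousAt).continuousWithinAt
    have hderiv : ∀ s ∈ Set.Ico (0:ℝ) T, HasDerivWithinAt h 0 (Set.Ici s) s :=
      fun s hs => (hhd s hs.1).hasDerivWithinAt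
    have := constant_of_has_deriv_right_zero hcont hderiv T
      (Set.mem_Icc.mpr ⟨hT, le_rfl⟩)
    rw [hh] at this
    simpa using this
  -- feasibility bound
  have hfb : ∀ t, 0 ≤ t → ‖A (x t) - b‖ ≤ Real.exp (-t) * R₀ := by
    intro t ht
    have h1 := hfeas t ht
    have h2 : Real.exp t • (A (x t) - b)
        = ((A (x 0) - b) + θ₀ • (lam t - ls)) - θ₀ • (lam 0 - ls) := by
      rw [sub_eq_iff_eq_add] at h1
      rw [h1]
      module
    have h3 : Real.exp t * ‖A (x t) - b‖
        ≤ ‖A (x 0) - b‖ + θ₀ * ‖lam t - ls‖ + θ₀ * ‖lam 0 - ls‖ := by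
      have hn : ‖Real.exp t • (A (x t) - b)‖ = Real.exp t * ‖A (x t) - b‖ := by
        rw [norm_smul, Real.norm_eq_abs, abs_of_pos (Real.exp_pos t)]
      rw [← hn, h2]
      have t1 := norm_sub_le ((A (x 0) - b) + θ₀ • (lam t - ls)) (θ₀ • (lam 0 - ls))
      have t2 := norm_add_le (A (x 0) - b) (θ₀ • (lam t - ls))
      have t3 : ‖θ₀ • (lam t - ls)‖ = θ₀ * ‖lam t - ls‖ := by
        rw [norm_smul, Real.norm_eq_abs, abs_of_pos hθ₀]
      have t4 : ‖θ₀ • (lam 0 - ls)‖ = θ₀ * ‖lam 0 - ls‖ := by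
        rw [norm_smul, Real.norm_eq_abs, abs_of_pos hθ₀]
      rw [t3] at t2
      rw [t4] at t1
      linarith
    have h4 : Real.exp t * ‖A (x t) - b‖ ≤ R₀ := by
      have := hlamb t ht
      rw [hR₀]
      linarith
    have h5 : Real.exp (-t) * (Real.exp t * ‖A (x t) - b‖)
        ≤ Real.exp (-t) * R₀ :=
      mul_le_mul_of_nonneg_left h4 (Real.exp_pos (-t)).le
    have h6 : Real.exp (-t) * (Real.exp t * ‖A (x t) - b‖) = ‖A (x t) - b‖ := by
      rw [← mul_assoc, ← Real.exp_add, neg_add_cancel, Real.exp_zero, one_mul]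
    rwa [h6] at h5
  -- conclusion
  intro t ht
  refine ⟨hfb t ht, ?_⟩
  have hexp2 : (0:ℝ) < Real.exp (-t) := Real.exp_pos _
  have hip : |⟪ls, A (x t) - b⟫| ≤ ‖ls‖ * ‖A (x t) - b‖ :=
    abs_real_inner_le_norm ls (A (x t) - b)
  have hlsb : ‖ls‖ * ‖A (x t) - b‖ ≤ ‖ls‖ * (Real.exp (-t) * R₀) :=
    mul_le_mul_of_nonneg_left (hfb t ht) (norm_nonneg ls)
  have habs := abs_le.mp hip
  rw [abs_le]
  constructor
  · have h1 := hP (x t)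
    nlinarith [mul_nonneg hexp2.le hE0]
  · have h1 : f (x t) - f xs + ⟪ls, A (x t) - b⟫ ≤ Efun t := (hEnn t ht).2.1
    have h2 := hdecay t ht
    nlinarith
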